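/- Let φ : (0,∞)^{k−1} → (0,∞)^{k−1} be the map φ(x) = (x₁², …, x_{k−1}²), let T ⊆ (0,∞)^{k−1} be convex, and let S = φ^{−1}(T). Then S is √(k−1)-quasiconvex: for any x⁰, x¹ ∈ S, the path t ↦ φ^{−1}(φ(x⁰) + t(φ(x¹) − φ(x⁰))), t ∈ [0,1], lies in S and has length at most √(k−1)·‖x¹ − x⁰‖. -/

import Mathlib

open Metric Set

private lemma tele_mono (g : ℝ → ℝ) (hg : Monotone g) (u : ℕ → ℝ) (hu : Monotone u)
    (h01 : ∀ j, u j ∈ Icc (0:ℝ) 1) (n : ℕ) :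
    ∑ j ∈ Finset.range n, |g (u (j+1)) - g (u j)| ≤ g 1 - g 0 := by
  have heq : ∀ j ∈ Finset.range n, |g (u (j+1)) - g (u j)| = g (u (j+1)) - g (u j) := fun j _ =>
    abs_of_nonneg (sub_nonneg.2 (hg (hu (Nat.le_succ j))))
  rw [Finset.sum_congr rfl heq]
  have htel : ∑ j ∈ Finset.range n, (g (u (j+1)) - g (u j)) = g (u n) - g (u 0) :=
    Finset.sum_range_sub (fun j => g (u j)) n
  have h1 : g (u n) ≤ g 1 := hg (h01 n).2
  have h0 : g 0 ≤ g (u 0) := hg (h01 0).1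
  rw [htel]
  linarith

private lemma tele_abs (g : ℝ → ℝ) (hg : Monotone g ∨ Antitone g) (u : ℕ → ℝ) (hu : Monotone u)
    (h01 : ∀ j, u j ∈ Icc (0:ℝ) 1) (n : ℕ) :
    ∑ j ∈ Finset.range n, |g (u (j+1)) - g (u j)| ≤ |g 1 - g 0| := by
  rcases hg with hg | hg
  · exact (tele_mono g hg u hu h01 n).trans (le_abs_self _)
  · have := tele_mono (fun t => -g t) (fun a b hab => neg_le_neg (hg hab)) u hu h01 n
    simp only [neg_sub_neg] at this
    calc ∑ j ∈ Finset.range n, |g (u (j+1)) - g (u j)|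
        = ∑ j ∈ Finset.range n, |g (u j) - g (u (j+1))| := by
          exact Finset.sum_congr rfl fun j _ => abs_sub_comm _ _
      _ ≤ g 0 - g 1 := this
      _ ≤ |g 1 - g 0| := by rw [abs_sub_comm]; exact le_abs_self _

private lemma euclid_norm_le_sum_abs {m : ℕ} (y : EuclideanSpace ℝ (Fin m)) :
    ‖y‖ ≤ ∑ i, |y i| := by
  rw [EuclideanSpace.norm_eq]
  calc Real.sqrt (∑ i, ‖y i‖ ^ 2) ≤ Real.sqrt ((∑ i, ‖y i‖) ^ 2) :=
        Real.sqrt_le_sqrt (Finset.sum_sq_le_sq_sum_of_nonneg fun i _ => norm_nonneg _)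
    _ = ∑ i, ‖y i‖ := Real.sqrt_sq (Finset.sum_nonneg fun i _ => norm_nonneg _)
    _ = ∑ i, |y i| := by simp [Real.norm_eq_abs]

private lemma sum_abs_le_sqrt_card {m : ℕ} (y : EuclideanSpace ℝ (Fin m)) :
    ∑ i, |y i| ≤ Real.sqrt m * ‖y‖ := by
  rw [EuclideanSpace.norm_eq]
  have h : (∑ i, |y i|) ^ 2 ≤ (m : ℝ) * ∑ i, |y i| ^ 2 := by
    simpa using sq_sum_le_card_mul_sum_sq (s := Finset.univ) (f := fun i => |y i|)
  calc ∑ i, |y i| = Real.sqrt ((∑ i, |y i|) ^ 2) :=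
        (Real.sqrt_sq (Finset.sum_nonneg fun i _ => abs_nonneg _)).symm
    _ ≤ Real.sqrt ((m : ℝ) * ∑ i, |y i| ^ 2) := Real.sqrt_le_sqrt h
    _ = Real.sqrt m * Real.sqrt (∑ i, ‖y i‖ ^ 2) := by
        rw [Real.sqrt_mul (Nat.cast_nonneg m)]
        simp [Real.norm_eq_abs]

/-- Preimages of convex sets in the positive orthant under the coordinatewise
squaring map `φ(x) = (x₁², …, x_{k−1}²)` are `√(k−1)`-quasiconvex: the path
`t ↦ φ⁻¹(φ(x⁰) + t(φ(x¹) − φ(x⁰)))` stays in `S` and has length at most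
`√(k−1) ‖x¹ − x⁰‖`. -/
theorem quasiconvex_of_sq_preimage_convex (m : ℕ)
    (φ : EuclideanSpace ℝ (Fin m) → EuclideanSpace ℝ (Fin m))
    (hφ : ∀ x i, φ x i = (x i) ^ 2)
    (T : Set (EuclideanSpace ℝ (Fin m))) (hT : Convex ℝ T)
    (hTpos : ∀ y ∈ T, ∀ i, 0 < y i)
    (S : Set (EuclideanSpace ℝ (Fin m)))
    (hS : S = {x | (∀ i, 0 < x i) ∧ φ x ∈ T})
    (x₀ : EuclideanSpace ℝ (Fin m)) (hx₀ : x₀ ∈ S)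
    (x₁ : EuclideanSpace ℝ (Fin m)) (hx₁ : x₁ ∈ S)
    (γ : ℝ → EuclideanSpace ℝ (Fin m))
    (hγ : ∀ t i, γ t i = Real.sqrt (φ x₀ i + t * (φ x₁ i - φ x₀ i))) :
    (∀ t ∈ Icc (0:ℝ) 1, γ t ∈ S) ∧
      eVariationOn γ (Icc 0 1) ≤ ENNReal.ofReal (Real.sqrt m * ‖x₁ - x₀‖) := by
  rw [hS] at hx₀ hx₁
  obtain ⟨h0pos, h0T⟩ := hx₀
  obtain ⟨h1pos, h1T⟩ := hx₁
  have ha : ∀ i, 0 < φ x₀ i := fun i => by rw [hφ]; exact pow_pos (h0pos i) 2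
  have hb : ∀ i, 0 < φ x₁ i := fun i => by rw [hφ]; exact pow_pos (h1pos i) 2
  have hval : ∀ t ∈ Icc (0:ℝ) 1, ∀ i, 0 < φ x₀ i + t * (φ x₁ i - φ x₀ i) := by
    intro t ht i
    rcases lt_or_ge t 1 with h | h
    · nlinarith [mul_pos (by linarith : (0:ℝ) < 1 - t) (ha i), mul_nonneg ht.1 (hb i).le]
    · have ht1 : t = 1 := le_antisymm ht.2 h
      rw [ht1]
      nlinarith [hb i]
  have hmem : ∀ t ∈ Icc (0:ℝ) 1, γ t ∈ S := by
    intro t ht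
    rw [hS]
    have hpos : ∀ i, 0 < γ t i := by
      intro i
      rw [hγ]
      exact Real.sqrt_pos.2 (hval t ht i)
    refine ⟨hpos, ?_⟩
    have : φ (γ t) = (1 - t) • φ x₀ + t • φ x₁ := by
      ext i
      have happ : ((1 - t) • φ x₀ + t • φ x₁) i = (1 - t) * φ x₀ i + t * φ x₁ i := rfl
      rw [hφ, hγ, Real.sq_sqrt (hval t ht i).le, happ]
      ring
    rw [this]
    exact hT h0T h1T (by linarith [ht.2]) ht.1 (by ring)
  refine ⟨hmem, ?_⟩
  apply iSup_le
  rintro ⟨n, ⟨u, hu, us⟩⟩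
  simp only
  have hdist : ∀ j, edist (γ (u (j+1))) (γ (u j)) = ENNReal.ofReal (dist (γ (u (j+1))) (γ (u j))) :=
    fun j => edist_dist _ _
  calc ∑ j ∈ Finset.range n, edist (γ (u (j+1))) (γ (u j))
      = ENNReal.ofReal (∑ j ∈ Finset.range n, dist (γ (u (j+1))) (γ (u j))) := by
        rw [ENNReal.ofReal_sum_of_nonneg fun j _ => dist_nonneg]
        exact Finset.sum_congr rfl fun j _ => hdist j
    _ ≤ ENNReal.ofReal (Real.sqrt m * ‖x₁ - x₀‖) := by
        apply ENNReal.ofReal_le_ofReal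
        calc ∑ j ∈ Finset.range n, dist (γ (u (j+1))) (γ (u j))
            ≤ ∑ j ∈ Finset.range n, ∑ i, |γ (u (j+1)) i - γ (u j) i| := by
              apply Finset.sum_le_sum
              intro j _
              rw [dist_eq_norm]
              have := euclid_norm_le_sum_abs (γ (u (j+1)) - γ (u j))
              simpa using this
          _ = ∑ i, ∑ j ∈ Finset.range n, |γ (u (j+1)) i - γ (u j) i| := Finset.sum_comm
          _ ≤ ∑ i, |x₁ i - x₀ i| := by
              apply Finset.sum_le_sum
              intro i _
              set g : ℝ → ℝ := fun t => Real.sqrt (φ x₀ i + t * (φ x₁ i - φ x₀ i)) with hg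
              have hγg : ∀ t, γ t i = g t := fun t => hγ t i
              have hmono : Monotone g ∨ Antitone g := by
                rcases le_or_gt (φ x₀ i) (φ x₁ i) with h | h
                · left
                  intro s t hst
                  apply Real.sqrt_le_sqrt
                  nlinarith [mul_nonneg (sub_nonneg.2 hst) (sub_nonneg.2 h)]
                · right
                  intro s t hst
                  apply Real.sqrt_le_sqrt
                  nlinarith [mul_nonneg (sub_nonneg.2 hst) (sub_nonneg.2 h.le)]
              have hend : |g 1 - g 0| = |x₁ i - x₀ i| := by
                have e1 : g 1 = x₁ i := by
                  simp only [hg, one_mul]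
                  rw [show φ x₀ i + (φ x₁ i - φ x₀ i) = φ x₁ i by ring, hφ,
                    Real.sqrt_sq (h1pos i).le]
                have e0 : g 0 = x₀ i := by
                  simp only [hg, zero_mul, add_zero]
                  rw [hφ, Real.sqrt_sq (h0pos i).le]
                rw [e1, e0]
              calc ∑ j ∈ Finset.range n, |γ (u (j+1)) i - γ (u j) i|
                  = ∑ j ∈ Finset.range n, |g (u (j+1)) - g (u j)| := by
                    exact Finset.sum_congr rfl fun j _ => by rw [hγg, hγg]
                _ ≤ |g 1 - g 0| := tele_abs g hmono u hu us n
                _ = |x₁ i - x₀ i| := hend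
          _ ≤ Real.sqrt m * ‖x₁ - x₀‖ := by
              have := sum_abs_le_sqrt_card (x₁ - x₀)
              simpa using this
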